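/- Let F be a finite set, Rob : Set F → Prop monotone with Rob F, c : F → ℝ≥0 a cost function, and F' ⊆ F a set of features. Define a modified cost c' by c'(w) = c(w) for w ∉ F' and c'(w') > ∑_{w ∈ F∖F'} c(w) for each w' ∈ F'. If E* minimizes c'-cost over robust explanations and E* ∩ F' ≠ ∅, then no robust explanation disjoint from F' exists (i.e., the exclude-constrained problem is infeasible). -/

import Mathlib

theorem stmt_8 {F : Type*} [Fintype F] [DecidableEq F] (Rob : Finset F → Prop)
    (hmono : ∀ E E' : Finset F, E ⊆ E' → Rob E → Rob E')
    (hfull : Rob Finset.univ)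
    (c c' : F → NNReal) (F' : Finset F)
    (hc'eq : ∀ w ∉ F', c' w = c w)
    (hc'big : ∀ w' ∈ F', (∑ w ∈ Finset.univ \ F', c w) < c' w')
    (Estar : Finset F) (hrob : Rob Estar)
    (hmin : ∀ E : Finset F, Rob E → ∑ w ∈ Estar, c' w ≤ ∑ w ∈ E, c' w)
    (hinter : (Estar ∩ F').Nonempty) :
    ¬ ∃ E : Finset F, Rob E ∧ E ∩ F' = ∅ := by
  rintro ⟨E, hE, hdisj⟩
  obtain ⟨w', hw'⟩ := hinter
  rw [Finset.mem_inter] at hw'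
  have hEsub : E ⊆ Finset.univ \ F' := by
    intro x hx
    simp only [Finset.mem_sdiff, Finset.mem_univ, true_and]
    intro hxF'
    have : x ∈ E ∩ F' := Finset.mem_inter.mpr ⟨hx, hxF'⟩
    simp [hdisj] at this
  have h1 : ∑ w ∈ E, c' w = ∑ w ∈ E, c w := by
    refine Finset.sum_congr rfl fun x hx => hc'eq x ?_
    intro hxF'
    have : x ∈ E ∩ F' := Finset.mem_inter.mpr ⟨hx, hxF'⟩
    simp [hdisj] at this
  have h2 : ∑ w ∈ E, c w ≤ ∑ w ∈ Finset.univ \ F', c w :=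
    Finset.sum_le_sum_of_subset hEsub
  have h3 : c' w' ≤ ∑ w ∈ Estar, c' w :=
    Finset.single_le_sum (fun i _ => zero_le) hw'.1
  have := hmin E hE
  have : c' w' ≤ ∑ w ∈ Finset.univ \ F', c w := by
    calc c' w' ≤ ∑ w ∈ Estar, c' w := h3
    _ ≤ ∑ w ∈ E, c' w := hmin E hE
    _ = ∑ w ∈ E, c w := h1
    _ ≤ _ := h2
  exact absurd this (not_le.mpr (hc'big w' hw'.2))
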